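/- Counting inequality used in red-blue transitivity: for integers t ≥ 2 and k ≥ 10t/α with 0 < α ≤ 1, one has 2α·C(k,2t-3) − (C(k,2t-4) + C(k,2t-5) + ⋯ + C(k,0)) ≥ α·C(k,2t-3). -/
import Mathlib


/-- Counting inequality used in red-blue transitivity: for `t ≥ 2`, `0 < α ≤ 1` and
`k ≥ 10t/α`, `2α·C(k,2t-3) − (C(k,2t-4) + ⋯ + C(k,0)) ≥ α·C(k,2t-3)`. -/
theorem stmt_6 (t k : ℕ) (ht : 2 ≤ t) (α : ℝ) (hα : 0 < α) (hα1 : α ≤ 1)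
    (hk : (10 * t : ℝ) ≤ α * k) :
    α * (k.choose (2 * t - 3) : ℝ)
      ≤ 2 * α * (k.choose (2 * t - 3) : ℝ)
        - ∑ j ∈ Finset.range (2 * t - 3), (k.choose j : ℝ) := by
  set m := 2 * t - 3 with hm
  have ht' : (2 : ℝ) ≤ t := by exact_mod_cast ht
  have hkR : (10 * t : ℝ) ≤ k := le_trans hk (by nlinarith [Nat.cast_nonneg (α := ℝ) k])
  have hmt : m + 3 = 2 * t := by omega
  have hmle : (m : ℝ) + 3 = 2 * t := by exact_mod_cast hmt
  -- step: for j < m, C(k,j) ≤ (α/4) * C(k,j+1)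
  have step : ∀ j, j < m → (k.choose j : ℝ) ≤ (α / 4) * k.choose (j + 1) := by
    intro j hj
    have hjt : (j : ℝ) ≤ 2 * t - 4 := by
      have : (j : ℝ) + 1 ≤ m := by exact_mod_cast hj
      linarith
    have hjk : j < k := by
      have : (j : ℝ) < k := by linarith
      exact_mod_cast this
    have hrec : (k.choose (j + 1) : ℝ) * (j + 1) = k.choose j * (k - j) := by
      have := Nat.choose_succ_right_eq k j
      have hcast : ((k.choose (j + 1) * (j + 1) : ℕ) : ℝ) = ((k.choose j * (k - j) : ℕ) : ℝ) := by
        exact_mod_cast congrArg (Nat.cast (R := ℝ)) this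
      push_cast [Nat.cast_sub hjk.le] at hcast
      linarith [hcast]
    have hαk : α * (k - j) ≥ 4 * ((j : ℝ) + 1) := by
      have h1 : α * j ≤ j := by nlinarith [Nat.cast_nonneg (α := ℝ) j]
      nlinarith
    have hkj : (0 : ℝ) < (k : ℝ) - j := by
      have : (j : ℝ) < k := by exact_mod_cast hjk
      linarith
    have hc : (0 : ℝ) ≤ k.choose (j + 1) := Nat.cast_nonneg _
    have : (k.choose j : ℝ) * (k - j) ≤ (α / 4) * k.choose (j + 1) * (k - j) := by
      rw [← hrec]
      have : (j : ℝ) + 1 ≤ (α / 4) * ((k : ℝ) - j) := by linarith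
      nlinarith
    exact le_of_mul_le_mul_right this hkj
  -- iterate: C(k, m-i) ≤ (α/4)^i * C(k,m)
  have iter : ∀ i, i ≤ m → (k.choose (m - i) : ℝ) ≤ (α / 4) ^ i * k.choose m := by
    intro i
    induction i with
    | zero => simp
    | succ n ih =>
      intro hn
      have hn' : n ≤ m := by omega
      have h1 : m - (n + 1) < m := by omega
      have h2 : m - (n + 1) + 1 = m - n := by omega
      have := step (m - (n + 1)) h1
      rw [h2] at this
      have h3 := ih hn'
      have hr : (0 : ℝ) ≤ α / 4 := by linarith
      calc (k.choose (m - (n + 1)) : ℝ) ≤ (α / 4) * k.choose (m - n) := this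
        _ ≤ (α / 4) * ((α / 4) ^ n * k.choose m) := by nlinarith
        _ = (α / 4) ^ (n + 1) * k.choose m := by ring
  -- sum bound
  have hsum : ∑ j ∈ Finset.range m, (k.choose j : ℝ) ≤ α * k.choose m := by
    have hbd : ∀ j ∈ Finset.range m, (k.choose j : ℝ) ≤ (α / 4) * (1 / 4 : ℝ) ^ (m - j - 1) * k.choose m := by
      intro j hj
      rw [Finset.mem_range] at hj
      have h1 : m - (m - j) = j := by omega
      have h2 := iter (m - j) (by omega)
      rw [h1] at h2
      set n := m - j - 1 with hn
      have h3 : m - j = n + 1 := by omega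
      have hr4 : (α / 4) ^ (m - j) ≤ (α / 4) * (1 / 4 : ℝ) ^ n := by
        rw [h3, pow_succ]
        have hle : (α / 4) ^ n ≤ (1 / 4 : ℝ) ^ n :=
          pow_le_pow_left₀ (by linarith) (by linarith) _
        nlinarith [pow_nonneg (show (0:ℝ) ≤ α/4 by linarith) n]
      have hc : (0 : ℝ) ≤ k.choose m := Nat.cast_nonneg _
      calc (k.choose j : ℝ) ≤ (α / 4) ^ (m - j) * k.choose m := h2
        _ ≤ (α / 4) * (1 / 4 : ℝ) ^ n * k.choose m := by nlinarith
    have hg : ∑ j ∈ Finset.range m, (1 / 4 : ℝ) ^ j ≤ 4 / 3 := by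
      rw [geom_sum_eq (show (1/4 : ℝ) ≠ 1 by norm_num) m,
        div_le_iff_of_neg (show (1/4 : ℝ) - 1 < 0 by norm_num)]
      nlinarith [pow_nonneg (show (0:ℝ) ≤ (1/4:ℝ) by norm_num) m]
    have hc : (0 : ℝ) ≤ k.choose m := Nat.cast_nonneg _
    calc ∑ j ∈ Finset.range m, (k.choose j : ℝ)
        ≤ ∑ j ∈ Finset.range m, (α / 4) * (1 / 4 : ℝ) ^ (m - j - 1) * k.choose m :=
          Finset.sum_le_sum hbd
      _ = ∑ j ∈ Finset.range m, (α / 4) * (1 / 4 : ℝ) ^ (m - 1 - j) * k.choose m := by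
          refine Finset.sum_congr rfl fun j hj => ?_
          rw [Finset.mem_range] at hj
          have : m - j - 1 = m - 1 - j := by omega
          rw [this]
      _ = (α / 4) * (∑ j ∈ Finset.range m, (1 / 4 : ℝ) ^ j) * k.choose m := by
          rw [← Finset.sum_range_reflect (fun j => (1/4:ℝ)^j) m, Finset.mul_sum,
            Finset.sum_mul]
      _ ≤ (α / 4) * (4 / 3) * k.choose m := by
          have := mul_le_mul_of_nonneg_right
            (mul_le_mul_of_nonneg_left hg (show (0:ℝ) ≤ α/4 by linarith)) hc
          linarith
      _ ≤ α * k.choose m := by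
          have := mul_le_mul_of_nonneg_right (show α/4*(4/3) ≤ α by linarith) hc
          linarith
  linarith
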